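/- If X ~ ESBIII(c,k,ε) with c > 2, then Var(X) = (k/2) B(1-2/c, 2/c+k)(2 + 6ε²) - 4ε²k² B(1-1/c, 1/c+k)². -/

import Mathlib

open Real

/-- sign function with sign(0) = 1, as in the paper. -/
noncomputable def sgn (x : ℝ) : ℝ := if x < 0 then -1 else 1

/-- ESBIII density. -/
noncomputable def esbiiiPdf (c k ε : ℝ) (x : ℝ) : ℝ :=
  (c * k / 2) * ((sgn x * x) / (1 + sgn x * ε)) ^ (-(c + 1)) *
    (1 + ((sgn x * x) / (1 + sgn x * ε)) ^ (-c)) ^ (-(k + 1))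

section Aux
open Set MeasureTheory

lemma powcomb {w s c : ℝ} (hw0 : 0 < w) (h1w : 0 < 1 - w) (hs : 0 < s) (hc : 0 < c)
    (n k : ℝ) :
    (s/c * (w ^ (1/c-1) * (1-w) ^ (-(1/c)-1))) *
      ((s * (w/(1-w)) ^ (1/c)) ^ n *
        (c*k/2 * ((w/(1-w)) ^ (1/c)) ^ (-(c+1)) * (w⁻¹) ^ (-(k+1))))
    = s ^ (n+1) * (k/2) * (w ^ ((n/c+k)-1) * (1-w) ^ ((1-n/c)-1)) := by
  have ht : 0 < w / (1-w) := div_pos hw0 h1w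
  have hrp : (0:ℝ) < (w/(1-w)) ^ (1/c) := rpow_pos_of_pos ht _
  have e1 : ((w/(1-w)) ^ (1/c)) ^ (-(c+1)) = w ^ (-(c+1)/c) * (1-w) ^ ((c+1)/c) := by
    rw [← Real.rpow_mul ht.le, show (1/c) * (-(c+1)) = -(c+1)/c by ring,
      div_rpow hw0.le h1w.le, div_eq_mul_inv, ← Real.rpow_neg h1w.le,
      show -(-(c+1)/c) = (c+1)/c by ring]
  have e2 : (s * (w/(1-w)) ^ (1/c)) ^ n = s ^ n * (w ^ (n/c) * (1-w) ^ (-(n/c))) := by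
    rw [mul_rpow hs.le hrp.le, ← Real.rpow_mul ht.le, show (1/c) * n = n/c by ring,
      div_rpow hw0.le h1w.le, div_eq_mul_inv, ← Real.rpow_neg h1w.le]
  have e3 : (w⁻¹) ^ (-(k+1)) = w ^ (k+1) := by
    rw [← Real.rpow_neg_one w, ← Real.rpow_mul hw0.le]
    norm_num
  rw [e1, e2, e3]
  have cw : ∀ p q : ℝ, w ^ p * w ^ q = w ^ (p+q) := fun p q => (rpow_add hw0 p q).symm
  have c1w : ∀ p q : ℝ, (1-w) ^ p * (1-w) ^ q = (1-w) ^ (p+q) := fun p q => (rpow_add h1w p q).symm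
  have cs : s ^ (n+1) = s ^ n * s := by rw [rpow_add hs, rpow_one]
  conv_rhs => rw [cs,
    show ((n/c+k)-1 : ℝ) = (1/c-1) + (n/c + (-(c+1)/c + (k+1))) by field_simp; ring,
    show ((1-n/c)-1 : ℝ) = (-(1/c)-1) + (-(n/c) + (c+1)/c) by field_simp; ring,
    rpow_add hw0, rpow_add hw0, rpow_add hw0, rpow_add h1w, rpow_add h1w]
  rw [div_mul_eq_mul_div, div_mul_eq_mul_div, div_eq_iff hc.ne']
  ring


lemma betaAux {a b : ℝ} (ha : 0 < a) (hb : 0 < b) :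
    IntegrableOn (fun w : ℝ => w ^ (b-1) * (1-w) ^ (a-1)) (Ioo (0:ℝ) 1) ∧
    ∫ w in Ioo (0:ℝ) 1, w ^ (b-1) * (1-w) ^ (a-1)
      = Real.Gamma a * Real.Gamma b / Real.Gamma (a + b) := by
  have hEq : EqOn (fun x : ℝ => (x:ℂ) ^ ((b:ℂ)-1) * (1-(x:ℂ)) ^ ((a:ℂ)-1))
      (fun x : ℝ => ((x ^ (b-1) * (1-x) ^ (a-1) : ℝ) : ℂ)) (Ioo 0 1) := by
    intro x hx
    have hx0 : (0:ℝ) ≤ x := hx.1.le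
    have hx1 : (0:ℝ) ≤ 1 - x := by linarith [hx.2]
    simp only [Complex.ofReal_mul]
    rw [Complex.ofReal_cpow hx0, Complex.ofReal_cpow hx1]
    push_cast
    ring_nf
  have hconv := Complex.betaIntegral_convergent (u := (b:ℂ)) (v := (a:ℂ))
      (by simpa using hb) (by simpa using ha)
  have hIntC : IntegrableOn (fun x : ℝ => (x:ℂ) ^ ((b:ℂ)-1) * (1-(x:ℂ)) ^ ((a:ℂ)-1))
      (Ioo (0:ℝ) 1) := by
    have := hconv.1
    exact this.mono_set Ioo_subset_Ioc_self
  have hIntC' : IntegrableOn (fun x : ℝ => ((x ^ (b-1) * (1-x) ^ (a-1) : ℝ) : ℂ))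
      (Ioo (0:ℝ) 1) := hIntC.congr_fun hEq measurableSet_Ioo
  have hInt : IntegrableOn (fun w : ℝ => w ^ (b-1) * (1-w) ^ (a-1)) (Ioo (0:ℝ) 1) := by
    have := hIntC'.re
    simp at this
    exact this
  refine ⟨hInt, ?_⟩
  -- value
  have hβ := Complex.Gamma_mul_Gamma_eq_betaIntegral
      (s := (a:ℂ)) (t := (b:ℂ)) (by simpa using ha) (by simpa using hb)
  rw [← Complex.betaIntegral_symm] at hβ
  have hval : Complex.betaIntegral (b:ℂ) (a:ℂ)
      = ((∫ w in Ioo (0:ℝ) 1, w ^ (b-1) * (1-w) ^ (a-1) : ℝ) : ℂ) := by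
    rw [Complex.betaIntegral, intervalIntegral.integral_of_le zero_le_one,
      integral_Ioc_eq_integral_Ioo, setIntegral_congr_fun measurableSet_Ioo hEq]
    exact integral_ofReal
  rw [hval] at hβ
  have hG : Real.Gamma (a + b) ≠ 0 := (Real.Gamma_pos_of_pos (by linarith)).ne'
  have : ((Real.Gamma a * Real.Gamma b : ℝ) : ℂ)
      = ((Real.Gamma (a+b) * ∫ w in Ioo (0:ℝ) 1, w ^ (b-1) * (1-w) ^ (a-1) : ℝ) : ℂ) := by
    push_cast
    rw [← Complex.Gamma_ofReal, ← Complex.Gamma_ofReal, ← Complex.Gamma_ofReal]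
    push_cast
    exact hβ
  have hr := Complex.ofReal_injective this
  field_simp
  linarith [hr]

lemma half (c k n s : ℝ) (hc : 0 < c) (hk : 0 < k) (hn0 : 0 ≤ n) (hnc : n < c) (hs : 0 < s) :
    IntegrableOn (fun x : ℝ => x ^ n * (c*k/2 * (x/s) ^ (-(c+1)) * (1+(x/s) ^ (-c)) ^ (-(k+1)))) (Ioi (0:ℝ)) ∧
    ∫ x in Ioi (0:ℝ), x ^ n * (c*k/2 * (x/s) ^ (-(c+1)) * (1+(x/s) ^ (-c)) ^ (-(k+1)))
      = s ^ (n+1) * (k/2) * (Real.Gamma (1-n/c) * Real.Gamma (n/c+k) / Real.Gamma ((1-n/c)+(n/c+k))) := by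
  have hc0 : c ≠ 0 := hc.ne'
  set g : ℝ → ℝ := fun x => x ^ n * (c*k/2 * (x/s) ^ (-(c+1)) * (1+(x/s) ^ (-c)) ^ (-(k+1))) with hgdef
  set φ : ℝ → ℝ := fun w => s * (w/(1-w)) ^ (1/c) with hφdef
  set φ' : ℝ → ℝ := fun w => s/c * (w ^ (1/c-1) * (1-w) ^ (-(1/c)-1)) with hφ'def
  have himg : φ '' Ioo 0 1 = Ioi 0 := by
    ext x
    simp only [mem_image, mem_Ioi]
    constructor
    · rintro ⟨w, hw, rfl⟩
      have h1w : 0 < 1 - w := by linarith [hw.2]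
      exact mul_pos hs (rpow_pos_of_pos (div_pos hw.1 h1w) _)
    · intro hx
      have hxs : 0 < x / s := div_pos hx hs
      have hy : 0 < (x/s) ^ c := rpow_pos_of_pos hxs c
      have hy1 : 0 < 1 + (x/s) ^ c := by linarith
      refine ⟨(x/s) ^ c / (1 + (x/s) ^ c), ⟨by positivity, ?_⟩, ?_⟩
      · rw [div_lt_one hy1]; linarith
      · show s * _ = x
        rw [show (x/s) ^ c / (1 + (x/s) ^ c) / (1 - (x/s) ^ c / (1 + (x/s) ^ c))
            = (x/s) ^ c by field_simp; ring]
        rw [← Real.rpow_mul hxs.le, mul_one_div_cancel hc0, rpow_one]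
        field_simp
  have hder : ∀ w ∈ Ioo (0:ℝ) 1, HasDerivWithinAt φ (φ' w) (Ioo (0:ℝ) 1) w := by
    intro w hw
    have hw0 : 0 < w := hw.1
    have h1w : 0 < 1 - w := by linarith [hw.2]
    have ht : 0 < w / (1-w) := div_pos hw0 h1w
    have hu : HasDerivAt (fun y : ℝ => y / (1 - y))
        ((1*(1-w) - w*(0-1))/(1-w)^2) w :=
      (hasDerivAt_id w).div ((hasDerivAt_const w (1:ℝ)).sub (hasDerivAt_id w)) h1w.ne'
    have hv : HasDerivAt (fun y : ℝ => y ^ (1/c)) (1/c * (w/(1-w)) ^ (1/c - 1)) (w/(1-w)) :=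
      Real.hasDerivAt_rpow_const (Or.inl ht.ne')
    have hcomp := (hv.comp w hu).const_mul s
    refine HasDerivAt.hasDerivWithinAt ?_
    convert hcomp using 1
    show s/c * (w ^ (1/c-1) * (1-w) ^ (-(1/c)-1)) = _
    rw [show (1*(1-w) - w*(0-1)) = 1 by ring]
    rw [div_rpow hw0.le h1w.le, ← Real.rpow_natCast (1-w) 2,
      show (-(1/c)-1:ℝ) = -((1/c-1) + ((2:ℕ):ℝ)) by push_cast; ring,
      Real.rpow_neg h1w.le, rpow_add h1w]
    have n1 : (1-w) ^ (1/c-1) ≠ 0 := (rpow_pos_of_pos h1w _).ne'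
    have n2 : (1-w) ^ ((2:ℕ):ℝ) ≠ 0 := (rpow_pos_of_pos h1w _).ne'
    field_simp
    all_goals rfl
  have hinj : InjOn φ (Ioo (0:ℝ) 1) := by
    apply StrictMonoOn.injOn
    intro w1 h1 w2 h2 hlt
    have h1w1 : 0 < 1 - w1 := by linarith [h1.2]
    have h1w2 : 0 < 1 - w2 := by linarith [h2.2]
    have hd : w1/(1-w1) < w2/(1-w2) := by
      rw [div_lt_div_iff₀ h1w1 h1w2]; nlinarith [h1.1, h2.1]
    exact mul_lt_mul_of_pos_left
      (rpow_lt_rpow (div_pos h1.1 h1w1).le hd (by positivity)) hs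
  have ha : 0 < 1 - n/c := by
    rw [sub_pos, div_lt_one hc]; exact hnc
  have hb : 0 < n/c + k := by positivity
  obtain ⟨hbi, hbv⟩ := betaAux ha hb
  have hkey : ∀ w ∈ Ioo (0:ℝ) 1, |φ' w| • g (φ w)
      = s ^ (n+1) * (k/2) * (w ^ ((n/c+k)-1) * (1-w) ^ ((1-n/c)-1)) := by
    intro w hw
    have hw0 : 0 < w := hw.1
    have h1w : 0 < 1 - w := by linarith [hw.2]
    have ht : 0 < w/(1-w) := div_pos hw0 h1w
    have hφpos : 0 < φ' w := by
      simp only [hφ'def]; positivity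
    rw [abs_of_pos hφpos, smul_eq_mul]
    have hφs : φ w / s = (w/(1-w)) ^ (1/c) := by
      simp only [hφdef]; field_simp
    have h2 : (φ w / s) ^ (-c) = (1-w)/w := by
      rw [hφs, ← Real.rpow_mul ht.le, show (1/c) * (-c) = -1 by field_simp,
        rpow_neg_one, inv_div]
    have h3 : 1 + (φ w / s) ^ (-c) = w⁻¹ := by
      rw [h2]; field_simp; ring
    simp only [hgdef]
    rw [h3, hφs]
    simp only [hφdef, hφ'def]
    exact powcomb hw0 h1w hs hc n k
  have hiff := integrableOn_image_iff_integrableOn_abs_deriv_smul measurableSet_Ioo hder hinj g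
  rw [himg] at hiff
  have hval := integral_image_eq_integral_abs_deriv_smul measurableSet_Ioo hder hinj g
  rw [himg] at hval
  constructor
  · rw [hiff]
    have hcm : IntegrableOn (fun w : ℝ => s^(n+1)*(k/2) * (w ^ ((n/c+k)-1) * (1-w) ^ ((1-n/c)-1))) (Ioo (0:ℝ) 1) :=
      Integrable.const_mul hbi _
    exact IntegrableOn.congr_fun hcm (fun w hw => (hkey w hw).symm) measurableSet_Ioo
  · rw [hval, setIntegral_congr_fun measurableSet_Ioo hkey,
      MeasureTheory.integral_const_mul, hbv]

end Aux
section Main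
open Set MeasureTheory

/-- Variance of the ESBIII distribution for c > 2. -/
theorem esbiii_variance (c k ε : ℝ) (hc : 2 < c) (hk : 0 < k)
    (hε : ε ∈ Set.Ioo (-1 : ℝ) 1) :
    (∫ x : ℝ, x ^ 2 * esbiiiPdf c k ε x) - (∫ x : ℝ, x * esbiiiPdf c k ε x) ^ 2 =
      (k / 2) *
          (Real.Gamma (1 - 2 / c) * Real.Gamma (2 / c + k) /
            Real.Gamma ((1 - 2 / c) + (2 / c + k))) * (2 + 6 * ε ^ 2) -
        4 * ε ^ 2 * k ^ 2 *
          (Real.Gamma (1 - 1 / c) * Real.Gamma (1 / c + k) /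
            Real.Gamma ((1 - 1 / c) + (1 / c + k))) ^ 2 := by
  obtain ⟨hε1, hε2⟩ := hε
  have hc0 : (0:ℝ) < c := by linarith
  have sp : (0:ℝ) < 1 + ε := by linarith
  have sm : (0:ℝ) < 1 - ε := by linarith
  have h2p := half c k 2 (1+ε) hc0 hk (by norm_num) (by linarith) sp
  have h2m := half c k 2 (1-ε) hc0 hk (by norm_num) (by linarith) sm
  have h1p := half c k 1 (1+ε) hc0 hk (by norm_num) (by linarith) sp
  have h1m := half c k 1 (1-ε) hc0 hk (by norm_num) (by linarith) sm
  -- pdf on positives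
  have pdfp : ∀ x ∈ Ioi (0:ℝ), esbiiiPdf c k ε x
      = c*k/2 * (x/(1+ε)) ^ (-(c+1)) * (1+(x/(1+ε)) ^ (-c)) ^ (-(k+1)) := by
    intro x hx
    have h : ¬ x < 0 := not_lt.mpr (le_of_lt hx)
    simp only [esbiiiPdf, sgn, if_neg h, one_mul]
  have pdfm : ∀ x ∈ Ioi (0:ℝ), esbiiiPdf c k ε (-x)
      = c*k/2 * (x/(1-ε)) ^ (-(c+1)) * (1+(x/(1-ε)) ^ (-c)) ^ (-(k+1)) := by
    intro x hx
    have h : (-x) < 0 := neg_lt_zero.mpr hx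
    have harg : (sgn (-x) * (-x)) / (1 + sgn (-x) * ε) = x/(1-ε) := by
      simp only [sgn, if_pos h]; ring_nf
    simp only [esbiiiPdf, harg]
  -- EqOn positives
  have eqp2 : EqOn (fun x : ℝ => x ^ 2 * esbiiiPdf c k ε x)
      (fun x : ℝ => x ^ ((2:ℝ)) * (c*k/2 * (x/(1+ε)) ^ (-(c+1)) * (1+(x/(1+ε)) ^ (-c)) ^ (-(k+1))))
      (Ioi 0) := by
    intro x hx
    simp only
    rw [pdfp x hx, show (2:ℝ) = ((2:ℕ):ℝ) by norm_num, rpow_natCast]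
  have eqp1 : EqOn (fun x : ℝ => x * esbiiiPdf c k ε x)
      (fun x : ℝ => x ^ ((1:ℝ)) * (c*k/2 * (x/(1+ε)) ^ (-(c+1)) * (1+(x/(1+ε)) ^ (-c)) ^ (-(k+1))))
      (Ioi 0) := by
    intro x hx
    simp only
    rw [pdfp x hx, rpow_one]
  -- EqOn for composed-with-neg on positives
  have eqm2 : EqOn (fun x : ℝ => (-x) ^ 2 * esbiiiPdf c k ε (-x))
      (fun x : ℝ => x ^ ((2:ℝ)) * (c*k/2 * (x/(1-ε)) ^ (-(c+1)) * (1+(x/(1-ε)) ^ (-c)) ^ (-(k+1))))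
      (Ioi 0) := by
    intro x hx
    simp only
    rw [pdfm x hx, show (2:ℝ) = ((2:ℕ):ℝ) by norm_num, rpow_natCast]
    ring
  have eqm1 : EqOn (fun x : ℝ => (-x) * esbiiiPdf c k ε (-x))
      (fun x : ℝ => -(x ^ ((1:ℝ)) * (c*k/2 * (x/(1-ε)) ^ (-(c+1)) * (1+(x/(1-ε)) ^ (-c)) ^ (-(k+1)))))
      (Ioi 0) := by
    intro x hx
    simp only
    rw [pdfm x hx, rpow_one]
    ring
  -- neg image facts
  have hnegim : (fun x : ℝ => -x) '' Ioi 0 = Iio 0 := by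
    ext y
    simp only [mem_image, mem_Ioi, mem_Iio]
    constructor
    · rintro ⟨x, hx, rfl⟩; linarith
    · intro hy; exact ⟨-y, by linarith, by ring⟩
  have hnegder : ∀ x ∈ Ioi (0:ℝ), HasDerivWithinAt (fun x : ℝ => -x) (-1) (Ioi 0) x :=
    fun x _ => (hasDerivAt_neg x).hasDerivWithinAt
  have hneginj : InjOn (fun x : ℝ => -x) (Ioi 0) := fun a _ b _ h => by linarith [neg_injective h]
  -- generic transfer for any F : ℝ → ℝ
  have transfer : ∀ F G : ℝ → ℝ, EqOn (fun x : ℝ => F (-x)) G (Ioi 0) → IntegrableOn G (Ioi 0) →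
      IntegrableOn F (Iio 0) ∧ ∫ x in Iio 0, F x = ∫ x in Ioi 0, G x := by
    intro F G hEq hG
    have hiff := integrableOn_image_iff_integrableOn_abs_deriv_smul measurableSet_Ioi hnegder hneginj F
    rw [hnegim] at hiff
    constructor
    · rw [hiff]
      refine IntegrableOn.congr_fun hG ?_ measurableSet_Ioi
      intro x hx
      simp only [smul_eq_mul, abs_neg, abs_one, one_mul]
      exact (hEq hx).symm
    · have h := integral_comp_neg_Ioi (0:ℝ) F
      rw [neg_zero] at h
      rw [← integral_Iic_eq_integral_Iio, ← h]
      exact setIntegral_congr_fun measurableSet_Ioi hEq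
  have T2 := transfer (fun x : ℝ => x ^ 2 * esbiiiPdf c k ε x) _ eqm2 h2m.1
  have T1 := transfer (fun x : ℝ => x * esbiiiPdf c k ε x) _
    (by intro x hx; exact eqm1 hx) (h1m.1.neg)
  -- totals
  have hIoi2 : IntegrableOn (fun x : ℝ => x ^ 2 * esbiiiPdf c k ε x) (Ioi 0) :=
    IntegrableOn.congr_fun h2p.1 (fun x hx => (eqp2 hx).symm) measurableSet_Ioi
  have hIoi1 : IntegrableOn (fun x : ℝ => x * esbiiiPdf c k ε x) (Ioi 0) :=
    IntegrableOn.congr_fun h1p.1 (fun x hx => (eqp1 hx).symm) measurableSet_Ioi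
  have tot2 : (∫ x : ℝ, x ^ 2 * esbiiiPdf c k ε x)
      = (∫ x in Iio (0:ℝ), x ^ 2 * esbiiiPdf c k ε x) + ∫ x in Ioi (0:ℝ), x ^ 2 * esbiiiPdf c k ε x := by
    rw [← integral_Iic_eq_integral_Iio]
    exact (intervalIntegral.integral_Iic_add_Ioi ((integrableOn_Iic_iff_integrableOn_Iio).mpr T2.1) hIoi2).symm
  have tot1 : (∫ x : ℝ, x * esbiiiPdf c k ε x)
      = (∫ x in Iio (0:ℝ), x * esbiiiPdf c k ε x) + ∫ x in Ioi (0:ℝ), x * esbiiiPdf c k ε x := by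
    rw [← integral_Iic_eq_integral_Iio]
    exact (intervalIntegral.integral_Iic_add_Ioi ((integrableOn_Iic_iff_integrableOn_Iio).mpr T1.1) hIoi1).symm
  -- values
  have vp2 : (∫ x in Ioi (0:ℝ), x ^ 2 * esbiiiPdf c k ε x)
      = (1+ε) ^ (3:ℕ) * (k/2) * (Real.Gamma (1-2/c) * Real.Gamma (2/c+k) / Real.Gamma ((1-2/c)+(2/c+k))) := by
    rw [setIntegral_congr_fun measurableSet_Ioi eqp2, h2p.2,
      show ((2:ℝ)+1) = ((3:ℕ):ℝ) by norm_num, rpow_natCast]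
  have vm2 : (∫ x in Iio (0:ℝ), x ^ 2 * esbiiiPdf c k ε x)
      = (1-ε) ^ (3:ℕ) * (k/2) * (Real.Gamma (1-2/c) * Real.Gamma (2/c+k) / Real.Gamma ((1-2/c)+(2/c+k))) := by
    rw [T2.2, h2m.2, show ((2:ℝ)+1) = ((3:ℕ):ℝ) by norm_num, rpow_natCast]
  have vp1 : (∫ x in Ioi (0:ℝ), x * esbiiiPdf c k ε x)
      = (1+ε) ^ (2:ℕ) * (k/2) * (Real.Gamma (1-1/c) * Real.Gamma (1/c+k) / Real.Gamma ((1-1/c)+(1/c+k))) := by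
    rw [setIntegral_congr_fun measurableSet_Ioi eqp1, h1p.2,
      show ((1:ℝ)+1) = ((2:ℕ):ℝ) by norm_num, rpow_natCast]
  have vm1 : (∫ x in Iio (0:ℝ), x * esbiiiPdf c k ε x)
      = -((1-ε) ^ (2:ℕ) * (k/2) * (Real.Gamma (1-1/c) * Real.Gamma (1/c+k) / Real.Gamma ((1-1/c)+(1/c+k)))) := by
    rw [T1.2]
    simp only [Pi.neg_apply, integral_neg]
    rw [h1m.2, show ((1:ℝ)+1) = ((2:ℕ):ℝ) by norm_num, rpow_natCast]
  rw [tot2, tot1, vp2, vm2, vp1, vm1]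
  ring

end Main
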